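/- Let n > 2 and let G = C_n^+(1,2) be the directed circulant graph on Z/nZ with outgoing arcs 1 and 2 at every vertex. Then no primitive pseudo orbit on G of length l with 0 < l ≤ n has any self-intersection; that is, every vertex of G appears at most once among the origin vertices of the bonds of any such pseudo orbit. -/

import Mathlib

/-!
Directed circulant graphs `C_n^+(a1,a2)` on the vertex set `ZMod n`:
circuits, periodic orbits, and pseudo orbits.

Each vertex `v` has exactly two outgoing bonds `(v, v + a1)` and `(v, v + a2)`
(taken mod `n`), where `0 < a1 < a2 < n`.  A bond is recorded by its origin
vertex together with its arc (`a1` or `a2`).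
-/

/-- The list of bonds (origin vertex, arc) of the walk starting at `v`
following the given list of arcs, on the circulant graph with vertex set `ZMod n`. -/
def bondsFrom (n : ℕ) : ZMod n → List ℕ → List (ZMod n × ℕ)
  | _, [] => []
  | v, a :: as => (v, a) :: bondsFrom n (v + (a : ZMod n)) as

/-- A circuit on the directed circulant graph `C_n^+(a1,a2)`: a starting vertex
together with a nonempty list of arcs, each equal to `a1` or `a2`, whose sum is
`0` modulo `n` (so that the walk returns to its starting vertex). -/
structure Circuit (n a1 a2 : ℕ) where
  start : ZMod n
  arcs : List ℕ
  arcs_ne : arcs ≠ []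
  arcs_mem : ∀ a ∈ arcs, a = a1 ∨ a = a2
  closed : ((arcs.sum : ℕ) : ZMod n) = 0

namespace Circuit

variable {n a1 a2 : ℕ}

/-- The length of a circuit: its number of bonds. -/
def len (c : Circuit n a1 a2) : ℕ := c.arcs.length

/-- The walk sum of a circuit: the sum of the arcs of its bonds. -/
def walkSum (c : Circuit n a1 a2) : ℕ := c.arcs.sum

/-- The list of bonds of a circuit, in order. -/
def bonds (c : Circuit n a1 a2) : List (ZMod n × ℕ) := bondsFrom n c.start c.arcs

/-- The number of times a circuit passes the vertex `v`: the number of bonds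
`(v₀, a)` of the circuit such that the residue of `v - v₀` in `{0, ..., n-1}`
is strictly smaller than the arc `a` (equivalently, than the residue of the
difference of the terminal and origin vertices of the bond). -/
def passCount (c : Circuit n a1 a2) (v : ZMod n) : ℕ :=
  c.bonds.countP fun b => decide ((v - b.1).val < b.2)

/-- The cyclic rotation of a circuit by `k` steps. -/
def rotate (c : Circuit n a1 a2) (k : ℕ) : Circuit n a1 a2 where
  start := c.start + (((c.arcs.take k).sum : ℕ) : ZMod n)
  arcs := c.arcs.rotate k
  arcs_ne := fun h => c.arcs_ne (by rwa [List.rotate_eq_nil_iff] at h)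
  arcs_mem := fun a ha => c.arcs_mem a (List.mem_rotate.mp ha)
  closed := by
    rw [show (c.arcs.rotate k).sum = c.arcs.sum from (c.arcs.rotate_perm k).sum_eq]
    exact c.closed

/-- A circuit is primitive if it does not consist of a strictly shorter circuit
repeated two or more times. -/
def IsPrimitive (c : Circuit n a1 a2) : Prop :=
  ¬ ∃ (w : List ℕ) (r : ℕ), 2 ≤ r ∧ ((w.sum : ℕ) : ZMod n) = 0 ∧
      c.arcs = (List.replicate r w).flatten

end Circuit

/-- Two circuits are related if the second is a cyclic rotation of the first. -/
def RotRel {n a1 a2 : ℕ} (c c' : Circuit n a1 a2) : Prop := ∃ k, c.rotate k = c'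

/-- A periodic orbit: an equivalence class of circuits under cyclic rotation. -/
def PeriodicOrbit (n a1 a2 : ℕ) : Type := Quot (@RotRel n a1 a2)

namespace PeriodicOrbit

variable {n a1 a2 : ℕ}

/-- The periodic orbit of a circuit. -/
def mk (c : Circuit n a1 a2) : PeriodicOrbit n a1 a2 := Quot.mk _ c

/-- The length of a periodic orbit: the length of any representative circuit. -/
def len : PeriodicOrbit n a1 a2 → ℕ :=
  Quot.lift Circuit.len (by
    rintro c c' ⟨k, rfl⟩
    simp [Circuit.len, Circuit.rotate])

/-- The walk sum of a periodic orbit: the walk sum of any representative circuit. -/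
def walkSum : PeriodicOrbit n a1 a2 → ℕ :=
  Quot.lift Circuit.walkSum (by
    rintro c c' ⟨k, rfl⟩
    exact ((c.arcs.rotate_perm k).sum_eq).symm)

/-- A periodic orbit is primitive if it is the class of a primitive circuit. -/
def IsPrimitive (γ : PeriodicOrbit n a1 a2) : Prop :=
  ∃ c : Circuit n a1 a2, mk c = γ ∧ c.IsPrimitive

/-- The multiset of bonds of a periodic orbit (computed from a representative;
this is independent of the representative since rotation permutes the bonds). -/
noncomputable def bonds (γ : PeriodicOrbit n a1 a2) : Multiset (ZMod n × ℕ) :=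
  ((Quot.exists_rep γ).choose.bonds : Multiset (ZMod n × ℕ))

/-- The number of times a periodic orbit passes a vertex (computed from a
representative; this is independent of the representative). -/
noncomputable def passCount (γ : PeriodicOrbit n a1 a2) (v : ZMod n) : ℕ :=
  (Quot.exists_rep γ).choose.passCount v

end PeriodicOrbit

/-- A pseudo orbit: a finite collection of periodic orbits. -/
abbrev PseudoOrbit (n a1 a2 : ℕ) := Multiset (PeriodicOrbit n a1 a2)

namespace PseudoOrbit

variable {n a1 a2 : ℕ}

/-- The length of a pseudo orbit: the sum of the lengths of its members. -/
def len (ps : PseudoOrbit n a1 a2) : ℕ := (ps.map PeriodicOrbit.len).sum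

/-- The walk sum of a pseudo orbit: the sum of the walk sums of its members. -/
def walkSum (ps : PseudoOrbit n a1 a2) : ℕ := (ps.map PeriodicOrbit.walkSum).sum

/-- A pseudo orbit is primitive if its members are primitive and pairwise distinct. -/
def IsPrimitive (ps : PseudoOrbit n a1 a2) : Prop :=
  (∀ γ ∈ ps, PeriodicOrbit.IsPrimitive γ) ∧ ps.Nodup

/-- The multiset of bonds of a pseudo orbit, counted with multiplicity over all
member periodic orbits. -/
noncomputable def bonds (ps : PseudoOrbit n a1 a2) : Multiset (ZMod n × ℕ) :=
  (ps.map PeriodicOrbit.bonds).sum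

/-- The multiset of origin vertices of the bonds of a pseudo orbit, with multiplicity. -/
noncomputable def origins (ps : PseudoOrbit n a1 a2) : Multiset (ZMod n) :=
  ps.bonds.map Prod.fst

/-- A pseudo orbit has no self-intersection if no vertex occurs more than once
among the origin vertices of its bonds. -/
def NoSelfIntersection (ps : PseudoOrbit n a1 a2) : Prop :=
  ∀ v : ZMod n, ps.origins.count v ≤ 1

/-- The number of vertices occurring exactly twice among the origin vertices of
the bonds of a pseudo orbit. -/
noncomputable def twoEncounterCount (ps : PseudoOrbit n a1 a2) : ℕ :=
  (ps.origins.toFinset.filter fun v => ps.origins.count v = 2).card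

/-- The pseudo orbit has exactly `N` self-intersections, each a 2-encounter of
length zero, and no other self-intersection: exactly `N` vertices occur exactly
twice among the origin vertices of its bonds, no vertex occurs more than twice,
and no bond occurs more than once. -/
def OnlyTwoEncounters (ps : PseudoOrbit n a1 a2) (N : ℕ) : Prop :=
  ps.bonds.Nodup ∧ (∀ v : ZMod n, ps.origins.count v ≤ 2) ∧ ps.twoEncounterCount = N

/-- The number of times a pseudo orbit passes a vertex: the total over its members. -/
noncomputable def passCount (ps : PseudoOrbit n a1 a2) (v : ZMod n) : ℕ :=
  (ps.map fun γ => γ.passCount v).sum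

end PseudoOrbit


namespace CircAux
open List

lemma sum_take_lt {l : List ℕ} (hl : ∀ a ∈ l, 1 ≤ a) {i j : ℕ}
    (hij : i < j) (hj : j ≤ l.length) : (l.take i).sum < (l.take j).sum := by
  induction j with
  | zero => omega
  | succ j ih =>
    have hjl : j < l.length := hj
    rw [List.sum_take_succ l j hjl]
    have h1 : 1 ≤ l[j] := hl _ (List.getElem_mem hjl)
    rcases Nat.lt_or_ge i j with h | h
    · have := ih h (le_of_lt hjl); omega
    · have : i = j := by omega
      subst this
      have : (l.take i).sum ≤ (l.take i).sum := le_refl _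
      omega

lemma sum_take_le {l : List ℕ} (i : ℕ) : (l.take i).sum ≤ l.sum := by
  conv_rhs => rw [← List.take_append_drop i l]
  rw [List.sum_append]; omega

lemma length_le_sum {l : List ℕ} (hl : ∀ a ∈ l, 1 ≤ a) : l.length ≤ l.sum := by
  induction l with
  | nil => simp
  | cons a l ih =>
    have := hl a (by simp)
    have := ih (fun b hb => hl b (List.mem_cons_of_mem _ hb))
    simp only [List.length_cons, List.sum_cons]; omega

lemma sum_le_two_mul {l : List ℕ} (hl : ∀ a ∈ l, a ≤ 2) : l.sum ≤ 2 * l.length := by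
  induction l with
  | nil => simp
  | cons a l ih =>
    have := hl a (by simp)
    have := ih (fun b hb => hl b (List.mem_cons_of_mem _ hb))
    simp only [List.length_cons, List.sum_cons]; omega

lemma eq_replicate_two {l : List ℕ} (h : ∀ a ∈ l, a ≤ 2)
    (hsum : l.sum = 2 * l.length) : l = List.replicate l.length 2 := by
  induction l with
  | nil => simp
  | cons a l ih =>
    have ha := h a (by simp)
    have hs := sum_le_two_mul (fun b hb => h b (List.mem_cons_of_mem _ hb))
    simp only [List.sum_cons, List.length_cons] at hsum
    have ha2 : a = 2 := by omega
    have hls : l.sum = 2 * l.length := by omega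
    rw [ha2, ih (fun b hb => h b (List.mem_cons_of_mem _ hb)) hls]
    simp [List.replicate_succ]

lemma bondsFrom_map_fst (n : ℕ) (v : ZMod n) (as : List ℕ) :
    (bondsFrom n v as).map Prod.fst
      = (List.range as.length).map (fun i => v + (((as.take i).sum : ℕ) : ZMod n)) := by
  induction as generalizing v with
  | nil => simp [bondsFrom]
  | cons a as ih =>
    rw [bondsFrom]
    simp only [List.map_cons, List.length_cons, List.range_succ_eq_map, List.map_map, ih]
    refine congrArg₂ _ (by simp) ?_
    apply List.map_congr_left
    intro i _
    simp only [Function.comp_apply, Nat.succ_eq_add_one, List.take_succ_cons, List.sum_cons,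
      Nat.cast_add, add_assoc]

lemma flatten_replicate_succ {α : Type*} (r : ℕ) (w : List α) :
    (List.replicate (r+1) w).flatten = w ++ (List.replicate r w).flatten := by
  simp [List.replicate_succ]

lemma flatten_replicate_succ' {α : Type*} (r : ℕ) (w : List α) :
    (List.replicate (r+1) w).flatten = (List.replicate r w).flatten ++ w := by
  induction r with
  | zero => simp
  | succ r ih =>
    rw [flatten_replicate_succ (r+1)]
    conv_lhs => rw [ih]
    rw [flatten_replicate_succ r]
    simp [List.append_assoc]

lemma rotate_flatten_replicate_length {α : Type*} (r : ℕ) (w : List α) :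
    ((List.replicate r w).flatten).rotate w.length = (List.replicate r w).flatten := by
  cases r with
  | zero => simp
  | succ r =>
    rw [flatten_replicate_succ]
    rw [List.rotate_eq_drop_append_take (by simp)]
    rw [List.drop_append_of_le_length le_rfl, List.take_append_of_le_length le_rfl]
    simp only [List.drop_length, List.take_length, List.nil_append]
    rw [← flatten_replicate_succ', flatten_replicate_succ]

lemma rotate_flatten_replicate_mul {α : Type*} (r q : ℕ) (w : List α) :
    ((List.replicate r w).flatten).rotate (q * w.length) = (List.replicate r w).flatten := by
  induction q with
  | zero => simp
  | succ q ih =>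
    rw [Nat.succ_mul, ← List.rotate_rotate, ih, rotate_flatten_replicate_length]

lemma rotate_mul_length {α : Type*} (l : List α) (q : ℕ) :
    l.rotate (q * l.length) = l := by
  induction q with
  | zero => simp
  | succ q ih => rw [Nat.succ_mul, ← List.rotate_rotate, ih, List.rotate_length]

lemma aux_rep {α : Type*} (t d : List α) (r : ℕ) :
    d ++ (List.replicate r (t ++ d)).flatten ++ t
      = (List.replicate (r+1) (d ++ t)).flatten := by
  induction r with
  | zero => simp
  | succ r ih =>
    rw [flatten_replicate_succ r, flatten_replicate_succ (r+1), ← ih]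
    simp [List.append_assoc]

lemma rotate_flatten_replicate {α : Type*} (r : ℕ) (w : List α) (s : ℕ) (hs : s ≤ w.length) :
    ((List.replicate r w).flatten).rotate s = (List.replicate r (w.rotate s)).flatten := by
  cases r with
  | zero => simp
  | succ r =>
    have hsl : s ≤ ((List.replicate (r+1) w).flatten).length := by
      simp only [List.length_flatten, List.map_replicate, List.sum_replicate, smul_eq_mul]
      calc s ≤ w.length := hs
        _ ≤ (r+1) * w.length := Nat.le_mul_of_pos_left _ (Nat.succ_pos r)
    have e : (List.replicate r w).flatten
        = (List.replicate r (w.take s ++ w.drop s)).flatten := by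
      rw [List.take_append_drop]
    rw [List.rotate_eq_drop_append_take hsl, flatten_replicate_succ,
      List.drop_append_of_le_length hs, List.take_append_of_le_length hs, e,
      List.append_assoc, ← List.append_assoc, aux_rep,
      List.rotate_eq_drop_append_take hs]

lemma nonprim_rotate {n : ℕ} {L : List ℕ} (hL : L ≠ []) (k : ℕ)
    (h : ∃ w r, 2 ≤ r ∧ ((w.sum : ℕ) : ZMod n) = 0 ∧ L = (List.replicate r w).flatten) :
    ∃ w r, 2 ≤ r ∧ ((w.sum : ℕ) : ZMod n) = 0 ∧
      L.rotate k = (List.replicate r w).flatten := by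
  obtain ⟨w, r, hr, hw, hLw⟩ := h
  have hwne : w ≠ [] := by
    rintro rfl
    exact hL (by simpa using hLw)
  have hwl : 0 < w.length := List.length_pos_iff.mpr hwne
  refine ⟨w.rotate (k % w.length), r, hr, by rwa [(w.rotate_perm _).sum_eq], ?_⟩
  subst hLw
  conv_lhs => rw [show k = (k / w.length) * w.length + k % w.length from
    (Nat.div_add_mod' k w.length).symm]
  rw [← List.rotate_rotate, rotate_flatten_replicate_mul,
    rotate_flatten_replicate _ _ _ (le_of_lt (Nat.mod_lt _ hwl))]

lemma rotate_inv {α : Type*} (l : List α) (k : ℕ) (hl : l ≠ []) :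
    (l.rotate k).rotate (l.length - k % l.length) = l := by
  have hlen : 0 < l.length := List.length_pos_iff.mpr hl
  rw [List.rotate_rotate]
  have h1 : k / l.length * l.length + k % l.length = k := Nat.div_add_mod' k l.length
  have h2 : k % l.length < l.length := Nat.mod_lt _ hlen
  have h3 : k + (l.length - k % l.length) = (k / l.length + 1) * l.length := by
    rw [add_mul, one_mul]
    omega
  rw [h3, rotate_mul_length]

lemma circuit_ext {n a1 a2 : ℕ} {c c' : Circuit n a1 a2}
    (h1 : c.start = c'.start) (h2 : c.arcs = c'.arcs) : c = c' := by
  cases c; cases c'; simp_all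

lemma isPrimitive_iff_of_rotRel {n a1 a2 : ℕ} {c c' : Circuit n a1 a2}
    (h : RotRel c c') : c.IsPrimitive ↔ c'.IsPrimitive := by
  obtain ⟨k, rfl⟩ := h
  unfold Circuit.IsPrimitive
  apply not_congr
  have harcs : (c.rotate k).arcs = c.arcs.rotate k := rfl
  constructor
  · intro hex
    rw [harcs]
    exact nonprim_rotate c.arcs_ne k hex
  · intro hex
    have hne : c.arcs.rotate k ≠ [] := fun h => c.arcs_ne (by rwa [List.rotate_eq_nil_iff] at h)
    have := nonprim_rotate hne (c.arcs.length - k % c.arcs.length) (by rwa [harcs] at hex)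
    rwa [rotate_inv c.arcs k c.arcs_ne] at this

lemma isPrimitive_iff_of_mk_eq {n a1 a2 : ℕ} {c c' : Circuit n a1 a2}
    (h : PeriodicOrbit.mk c = PeriodicOrbit.mk c') : c.IsPrimitive ↔ c'.IsPrimitive := by
  have h' : Relation.EqvGen RotRel c c' := Quot.eq.mp h
  clear h
  induction h' with
  | rel x y hxy => exact isPrimitive_iff_of_rotRel hxy
  | refl x => exact Iff.rfl
  | symm x y _ ih => exact ih.symm
  | trans x y z _ _ ih1 ih2 => exact ih1.trans ih2

lemma origins_list {n a1 a2 : ℕ} (c : Circuit n a1 a2) :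
    c.bonds.map Prod.fst = (List.range c.arcs.length).map
      (fun i => c.start + (((c.arcs.take i).sum : ℕ) : ZMod n)) :=
  bondsFrom_map_fst n c.start c.arcs

lemma origins_nodup_of_inj {n a1 a2 : ℕ} (c : Circuit n a1 a2)
    (H : ∀ i j, i < c.arcs.length → j < c.arcs.length →
        ((((c.arcs.take i).sum : ℕ) : ZMod n) = (((c.arcs.take j).sum : ℕ) : ZMod n)) → i = j) :
    (c.bonds.map Prod.fst).Nodup := by
  rw [origins_list]
  refine List.Nodup.map_on ?_ List.nodup_range
  intro i hi j hj hf
  rw [List.mem_range] at hi hj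
  exact H i j hi hj (add_left_cancel hf)

lemma origins_nodup_small {n a1 a2 : ℕ} (c : Circuit n a1 a2)
    (h1 : ∀ a ∈ c.arcs, 1 ≤ a) (hW : c.arcs.sum ≤ n) :
    (c.bonds.map Prod.fst).Nodup := by
  apply origins_nodup_of_inj
  intro i j hi hj hceq
  have hlt : ∀ m, m < c.arcs.length → (c.arcs.take m).sum < n := by
    intro m hm
    have h := sum_take_lt h1 hm (le_refl c.arcs.length)
    rw [List.take_length] at h
    omega
  have hmod := (ZMod.natCast_eq_natCast_iff _ _ _).mp hceq
  have e : (c.arcs.take i).sum = (c.arcs.take j).sum := by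
    have hi' := hlt i hi; have hj' := hlt j hj
    unfold Nat.ModEq at hmod
    rwa [Nat.mod_eq_of_lt hi', Nat.mod_eq_of_lt hj'] at hmod
  by_contra hne
  rcases Nat.lt_or_ge i j with h | h
  · have := sum_take_lt h1 h (le_of_lt hj); omega
  · have hj2 : j < i := by omega
    have := sum_take_lt h1 hj2 (le_of_lt hi); omega

lemma take_replicate_two_sum (L m : ℕ) (hm : m ≤ L) :
    ((List.replicate L 2).take m).sum = 2 * m := by
  simp only [List.take_replicate, List.sum_replicate, smul_eq_mul]
  omega

lemma origins_nodup_rep2 {n a1 a2 L : ℕ} (hodd : Odd n) (hLn : L ≤ n)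
    (c : Circuit n a1 a2) (harcs : c.arcs = List.replicate L 2) :
    (c.bonds.map Prod.fst).Nodup := by
  apply origins_nodup_of_inj
  intro i j hi hj hceq
  rw [harcs, List.length_replicate] at hi hj
  rw [harcs, take_replicate_two_sum L i (le_of_lt hi),
    take_replicate_two_sum L j (le_of_lt hj)] at hceq
  have hmod := (ZMod.natCast_eq_natCast_iff _ _ _).mp hceq
  have hcop : Nat.gcd n 2 = 1 := Nat.coprime_two_right.mpr hodd
  have hij := Nat.ModEq.cancel_left_of_coprime hcop hmod
  unfold Nat.ModEq at hij
  rw [Nat.mod_eq_of_lt (by omega), Nat.mod_eq_of_lt (by omega)] at hij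
  exact hij

end CircAux

/-- On `C_n^+(1,2)` with `n > 2`, no primitive pseudo orbit of
length `l` with `0 < l ≤ n` has any self-intersection: every vertex appears at
most once among the origin vertices of the bonds of any such pseudo orbit. -/
theorem no_self_intersection_one_two
    (n : ℕ) (hn : 2 < n)
    (ps : PseudoOrbit n 1 2) (hps : ps.IsPrimitive)
    (hl : 0 < ps.len) (hln : ps.len ≤ n) :
    ps.NoSelfIntersection := by
  classical
  have hn0 : 0 < n := by omega
  set rep : PeriodicOrbit n 1 2 → Circuit n 1 2 := fun γ => (Quot.exists_rep γ).choose with hrepdef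
  have hrep : ∀ γ, Quot.mk _ (rep γ) = γ := fun γ => (Quot.exists_rep γ).choose_spec
  have hbonds : ∀ γ : PeriodicOrbit n 1 2, γ.bonds = ((rep γ).bonds : Multiset (ZMod n × ℕ)) :=
    fun _ => rfl
  have hlen : ∀ γ : PeriodicOrbit n 1 2, γ.len = (rep γ).arcs.length := by
    intro γ
    conv_lhs => rw [← hrep γ]
    rfl
  have harc1 : ∀ c : Circuit n 1 2, ∀ a ∈ c.arcs, 1 ≤ a := by
    intro c a ha; rcases c.arcs_mem a ha with h | h <;> omega
  have harc2 : ∀ c : Circuit n 1 2, ∀ a ∈ c.arcs, a ≤ 2 := by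
    intro c a ha; rcases c.arcs_mem a ha with h | h <;> omega
  have hWdvd : ∀ c : Circuit n 1 2, n ∣ c.arcs.sum :=
    fun c => (ZMod.natCast_eq_zero_iff _ _).mp c.closed
  have hWlb : ∀ c : Circuit n 1 2, n ≤ c.arcs.sum := by
    intro c
    have hpos : 0 < c.arcs.sum :=
      List.sum_pos _ (fun x hx => harc1 c x hx) c.arcs_ne
    exact Nat.le_of_dvd hpos (hWdvd c)
  have hWub : ∀ c : Circuit n 1 2, c.arcs.sum ≤ 2 * c.arcs.length :=
    fun c => CircAux.sum_le_two_mul (harc2 c)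
  have hlen_sum : ps.len = (ps.map fun γ => (rep γ).arcs.length).sum :=
    congrArg Multiset.sum (Multiset.map_congr rfl fun γ _ => hlen γ)
  -- card bounds
  have hcard2 : Multiset.card ps ≤ 2 := by
    by_contra hc
    push_neg at hc
    have h1 : Multiset.card ps • n ≤ (ps.map fun γ => (rep γ).arcs.sum).sum := by
      have h := Multiset.card_nsmul_le_sum (s := ps.map fun γ => (rep γ).arcs.sum) (a := n)
        (by
          intro x hx
          obtain ⟨γ, _, rfl⟩ := Multiset.mem_map.mp hx
          exact hWlb _)
      simpa [Multiset.card_map] using h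
    have h2 : (ps.map fun γ => (rep γ).arcs.sum).sum ≤ 2 * ps.len := by
      rw [hlen_sum, ← Multiset.sum_map_mul_left]
      exact Multiset.sum_map_le_sum_map _ _ fun γ _ => hWub (rep γ)
    have h3 : Multiset.card ps * n ≤ 2 * n := by
      have h5 : Multiset.card ps • n ≤ 2 * ps.len := le_trans h1 h2
      have h6 : 2 * ps.len ≤ 2 * n := by omega
      have h7 := le_trans h5 h6
      simpa [smul_eq_mul] using h7
    have h4 : 3 * n ≤ Multiset.card ps * n := Nat.mul_le_mul_right n hc
    omega
  have hcard1 : 1 ≤ Multiset.card ps := by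
    by_contra h
    push_neg at h
    have : ps = 0 := Multiset.card_eq_zero.mp (by omega)
    rw [this] at hl
    simp [PseudoOrbit.len] at hl
  suffices h : ps.origins.Nodup by
    intro v
    exact Multiset.nodup_iff_count_le_one.mp h v
  have hcases : Multiset.card ps = 1 ∨ Multiset.card ps = 2 := by omega
  rcases hcases with h1 | h2
  · -- one orbit
    obtain ⟨γ, rfl⟩ := Multiset.card_eq_one.mp h1
    set c := rep γ with hc
    have hlen1 : ({γ} : PseudoOrbit n 1 2).len = c.arcs.length := by
      simp only [PseudoOrbit.len, Multiset.map_singleton, Multiset.sum_singleton]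
      exact hlen γ
    rw [hlen1] at hln
    have horig : ({γ} : PseudoOrbit n 1 2).origins = ↑(c.bonds.map Prod.fst) := by
      simp [PseudoOrbit.origins, PseudoOrbit.bonds, hbonds γ, Multiset.map_coe]
      exact List.Perm.refl _
    rw [horig, Multiset.coe_nodup]
    -- walk sum is n or 2n
    obtain ⟨k, hk⟩ := hWdvd c
    have hub : c.arcs.sum ≤ 2 * n := le_trans (hWub c) (by omega)
    have hlb := hWlb c
    have hk12 : k = 1 ∨ k = 2 := by
      rcases Nat.lt_or_ge k 1 with h | h
      · exfalso
        have hk0 : k = 0 := by omega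
        rw [hk0, Nat.mul_zero] at hk
        omega
      · rcases Nat.lt_or_ge k 3 with h' | h'
        · omega
        · exfalso
          have h3 : 3 * n ≤ n * k := by
            calc 3 * n = n * 3 := by ring
            _ ≤ n * k := Nat.mul_le_mul_left n h'
          omega
    rcases hk12 with rfl | rfl
    · -- walk sum = n
      exact CircAux.origins_nodup_small c (harc1 c) (by omega)
    · -- walk sum = 2n : all arcs are 2, length n
      have hlenn : c.arcs.length = n := by
        have := hWub c
        omega
      have harcs : c.arcs = List.replicate n 2 := by
        have h := CircAux.eq_replicate_two (harc2 c) (by omega)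
        rwa [hlenn] at h
      -- primitivity of c
      have hprim : c.IsPrimitive := by
        obtain ⟨c', hc', hcp⟩ := hps.1 γ (Multiset.mem_singleton_self γ)
        have hmk : PeriodicOrbit.mk c' = PeriodicOrbit.mk c := by
          rw [hc']
          exact (hrep γ).symm
        exact (CircAux.isPrimitive_iff_of_mk_eq hmk).mp hcp
      -- n must be odd
      have hodd : Odd n := by
        rcases Nat.even_or_odd n with he | ho
        · exfalso
          obtain ⟨m, hm⟩ := he
          apply hprim
          refine ⟨List.replicate m 2, 2, le_refl 2, ?_, ?_⟩
          · rw [List.sum_replicate, smul_eq_mul]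
            have hmn : m * 2 = n := by omega
            rw [hmn, ZMod.natCast_self]
          · rw [harcs, hm]
            rw [CircAux.flatten_replicate_succ, CircAux.flatten_replicate_succ]
            simp [← List.replicate_add]
        · exact ho
      exact CircAux.origins_nodup_rep2 hodd (le_refl n) c harcs
  · -- two orbits
    obtain ⟨γ₁, γ₂, rfl⟩ := Multiset.card_eq_two.mp h2
    have hne : γ₁ ≠ γ₂ := by
      have h := hps.2
      rw [Multiset.insert_eq_cons, Multiset.nodup_cons] at h
      intro he
      exact h.1 (he ▸ Multiset.mem_singleton_self γ₂)
    set c₁ := rep γ₁ with hc₁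
    set c₂ := rep γ₂ with hc₂
    have hlen12 : ({γ₁, γ₂} : PseudoOrbit n 1 2).len = c₁.arcs.length + c₂.arcs.length := by
      simp [PseudoOrbit.len, hlen γ₁, hlen γ₂]
      rfl
    rw [hlen12] at hln
    obtain ⟨hLa, hLb⟩ : 2 * c₁.arcs.length = n ∧ 2 * c₂.arcs.length = n := by
      have h1 := le_trans (hWlb c₁) (hWub c₁)
      have h2 := le_trans (hWlb c₂) (hWub c₂)
      omega
    have hW1 : c₁.arcs.sum = n := le_antisymm (by have := hWub c₁; omega) (hWlb c₁)
    have hW2 : c₂.arcs.sum = n := le_antisymm (by have := hWub c₂; omega) (hWlb c₂)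
    have harcs1 : c₁.arcs = List.replicate c₁.arcs.length 2 :=
      CircAux.eq_replicate_two (harc2 c₁) (by omega)
    have harcs2 : c₂.arcs = List.replicate c₂.arcs.length 2 :=
      CircAux.eq_replicate_two (harc2 c₂) (by omega)
    have hLL : c₂.arcs.length = c₁.arcs.length := by omega
    have horig : ({γ₁, γ₂} : PseudoOrbit n 1 2).origins
        = ↑(c₁.bonds.map Prod.fst) + ↑(c₂.bonds.map Prod.fst) := by
      simp [PseudoOrbit.origins, PseudoOrbit.bonds, hbonds γ₁, hbonds γ₂,
        Multiset.map_coe, Multiset.map_add]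
      exact List.Perm.refl _
    rw [horig, Multiset.nodup_add]
    refine ⟨?_, ?_, ?_⟩
    · rw [Multiset.coe_nodup]
      exact CircAux.origins_nodup_small c₁ (harc1 c₁) (by omega)
    · rw [Multiset.coe_nodup]
      exact CircAux.origins_nodup_small c₂ (harc1 c₂) (by omega)
    · rw [Multiset.disjoint_left]
      intro a ha₁ ha₂
      rw [Multiset.mem_coe, CircAux.origins_list, List.mem_map] at ha₁ ha₂
      obtain ⟨i, hi, hia⟩ := ha₁
      obtain ⟨j, hj, hja⟩ := ha₂
      rw [List.mem_range] at hi hj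
      set L := c₁.arcs.length with hLdef
      have hi' : i < L := hi
      have hj' : j < L := by rw [← hLL]; exact hj
      rw [harcs1, CircAux.take_replicate_two_sum L i (le_of_lt hi')] at hia
      rw [harcs2, hLL, CircAux.take_replicate_two_sum L j (le_of_lt hj')] at hja
      -- find rotation amount
      obtain ⟨k, hkL, hcast⟩ : ∃ k, k ≤ L ∧
          ((2*k : ℕ) : ZMod n) + ((2*j : ℕ) : ZMod n) = ((2*i : ℕ) : ZMod n) := by
        by_cases hji : j ≤ i
        · refine ⟨i - j, by omega, ?_⟩
          have e : 2*(i-j) + 2*j = 2*i := by omega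
          have h' := congrArg (fun t : ℕ => (t : ZMod n)) e
          simpa only [Nat.cast_add] using h'
        · refine ⟨i + L - j, by omega, ?_⟩
          have e : 2*(i + L - j) + 2*j = 2*i + n := by omega
          have h' := congrArg (fun t : ℕ => (t : ZMod n)) e
          simpa only [Nat.cast_add, ZMod.natCast_self, add_zero] using h'
      -- build the rotation equality
      have hrot : c₁.rotate k = c₂ := by
        apply CircAux.circuit_ext
        · show c₁.start + (((c₁.arcs.take k).sum : ℕ) : ZMod n) = c₂.start
          rw [harcs1, CircAux.take_replicate_two_sum L k hkL]
          linear_combination hia - hja + hcast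
        · show c₁.arcs.rotate k = c₂.arcs
          rw [harcs1, harcs2, hLL, List.rotate_replicate]
      have hgeq : γ₁ = γ₂ := by
        rw [← hrep γ₁, ← hrep γ₂]
        exact Quot.sound ⟨k, hrot⟩
      exact hne hgeq
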